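/- If φ: X → X' is a surjective morphism of geometries, then dim X ≥ dim X'. Moreover, if dim X = dim X' < ∞, then φ is an isomorphism of geometries. -/

import Mathlib

/-- A *geometry*: a closure space presented by its family of subspaces, satisfying
axioms G1 (∅, univ, singletons are subspaces), G2 (intersections of subspaces are
subspaces), G3 (MacLane–Steinitz exchange: no subspace strictly between `S` and `S ∨ x`)
and G4 (finitary). -/
structure GeometryOn (X : Type*) where
  IsSubspace : Set X → Prop
  empty_isSubspace : IsSubspace ∅
  univ_isSubspace : IsSubspace Set.univ
  singleton_isSubspace : ∀ x : X, IsSubspace {x}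
  sInter_isSubspace : ∀ 𝒮 : Set (Set X), (∀ S ∈ 𝒮, IsSubspace S) → IsSubspace (⋂₀ 𝒮)
  exchange : ∀ (S : Set X) (x : X), IsSubspace S → x ∉ S →
    ¬ ∃ S' : Set X, IsSubspace S' ∧ S ⊂ S' ∧ S' ⊂ ⋂₀ {T | IsSubspace T ∧ S ∪ {x} ⊆ T}
  finitary : ∀ (A : Set X) (x : X), x ∈ ⋂₀ {T | IsSubspace T ∧ A ⊆ T} →
    ∃ F : Finset X, ↑F ⊆ A ∧ x ∈ ⋂₀ {T | IsSubspace T ∧ ↑F ⊆ T}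

namespace GeometryOn

variable {X X' : Type*}

/-- The closure of `A`: the least subspace containing `A`. -/
def cl (G : GeometryOn X) (A : Set X) : Set X := ⋂₀ {T | G.IsSubspace T ∧ A ⊆ T}

/-- `A` is independent: no point of `A` lies in the closure of the remaining ones. -/
def Independent (G : GeometryOn X) (A : Set X) : Prop := ∀ a ∈ A, a ∉ G.cl (A \ {a})

/-- `B` is a basis of the subspace `S`: independent and generating `S`. -/
def IsBasisOf (G : GeometryOn X) (B S : Set X) : Prop :=
  B ⊆ S ∧ G.Independent B ∧ G.cl B = S

/-- `S` has (finite) dimension `d ∈ ℤ`: it has a basis with `d + 1` elements. -/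
def HasDimZ (G : GeometryOn X) (S : Set X) (d : ℤ) : Prop :=
  ∃ B : Finset X, G.IsBasisOf ↑B S ∧ (B.card : ℤ) = d + 1

/-- A morphism of geometries: preimages of subspaces are subspaces. -/
def IsMorphism (G : GeometryOn X) (G' : GeometryOn X') (φ : X → X') : Prop :=
  ∀ S' : Set X', G'.IsSubspace S' → G.IsSubspace (φ ⁻¹' S')

end GeometryOn



namespace GeometryOn
variable {X X' : Type*} {G : GeometryOn X}

lemma subset_cl (A : Set X) : A ⊆ G.cl A := fun x hx T hT => hT.2 hx

lemma cl_isSubspace (A : Set X) : G.IsSubspace (G.cl A) :=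
  G.sInter_isSubspace _ (fun _ hS => hS.1)

lemma cl_mono {A B : Set X} (h : A ⊆ B) : G.cl A ⊆ G.cl B :=
  fun x hx T hT => hx T ⟨hT.1, h.trans hT.2⟩

lemma cl_subset {A S : Set X} (hS : G.IsSubspace S) (h : A ⊆ S) : G.cl A ⊆ S :=
  fun x hx => hx S ⟨hS, h⟩

lemma cl_of_isSubspace {S : Set X} (hS : G.IsSubspace S) : G.cl S = S :=
  (cl_subset hS le_rfl).antisymm (subset_cl S)

lemma cl_cl (A : Set X) : G.cl (G.cl A) = G.cl A := cl_of_isSubspace (cl_isSubspace A)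

lemma cl_union_cl_left (A B : Set X) : G.cl (G.cl A ∪ B) = G.cl (A ∪ B) := by
  apply le_antisymm
  · exact cl_subset (cl_isSubspace _)
      (Set.union_subset (cl_subset (cl_isSubspace _) ((Set.subset_union_left).trans (subset_cl _)))
        ((Set.subset_union_right).trans (subset_cl _)))
  · exact cl_mono (Set.union_subset_union_left _ (subset_cl A))

lemma cl_empty : G.cl ∅ = ∅ := cl_of_isSubspace G.empty_isSubspace

lemma cl_singleton (x : X) : G.cl {x} = {x} := cl_of_isSubspace (G.singleton_isSubspace x)

/-- MacLane–Steinitz exchange for the closure operator. -/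
lemma cl_exchange {A : Set X} {x y : X} (hy : y ∈ G.cl (insert x A)) (hyA : y ∉ G.cl A) :
    x ∈ G.cl (insert y A) := by
  have hxA : x ∉ G.cl A := by
    intro hx
    apply hyA
    have : insert x A ⊆ G.cl A := Set.insert_subset hx (subset_cl A)
    exact cl_subset (cl_isSubspace A) this hy
  have hG3 := G.exchange (G.cl A) x (cl_isSubspace A) hxA
  have hkey : (⋂₀ {T | G.IsSubspace T ∧ G.cl A ∪ {x} ⊆ T}) = G.cl (insert x A) := by
    show G.cl (G.cl A ∪ {x}) = _
    rw [cl_union_cl_left]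
    congr 1
    rw [Set.union_singleton]
  set S' : Set X := G.cl (insert y A) with hS'
  have hS'sub : S' ⊆ G.cl (insert x A) := by
    apply cl_subset (cl_isSubspace _)
    exact Set.insert_subset hy ((subset_cl A).trans (cl_mono (Set.subset_insert x A)))
  by_contra hxS'
  apply hG3
  refine ⟨S', cl_isSubspace _, ?_, ?_⟩
  · constructor
    · exact cl_mono (Set.subset_insert y A)
    · intro hsub
      exact hyA (hsub (subset_cl _ (Set.mem_insert y A)))
  · rw [hkey]
    exact ⟨hS'sub, fun hsub => hxS' (hsub (subset_cl _ (Set.mem_insert x A)))⟩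

lemma Independent.mono {I J : Set X} (hJ : G.Independent J) (h : I ⊆ J) : G.Independent I :=
  fun a ha hcl => hJ a (h ha) (cl_mono (Set.diff_subset_diff_left h) hcl)

lemma indep_insert {I : Set X} {p : X} (hI : G.Independent I) (hp : p ∉ G.cl I) :
    G.Independent (insert p I) := by
  have hpI : p ∉ I := fun h => hp (subset_cl I h)
  intro a ha hcl
  rcases Set.mem_insert_iff.mp ha with rfl | haI
  · refine hp (cl_mono ?_ hcl)
    intro t ht
    rcases ht with ⟨h1 | h1, h2⟩
    · exact absurd h1 h2
    · exact h1
  · have hne : a ≠ p := fun h => hpI (h ▸ haI)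
    have : insert p I \ {a} = insert p (I \ {a}) := by
      ext t
      simp only [Set.mem_diff, Set.mem_insert_iff, Set.mem_singleton_iff]
      constructor
      · rintro ⟨h1 | h1, h2⟩
        · exact Or.inl h1
        · exact Or.inr ⟨h1, h2⟩
      · rintro (rfl | ⟨h1, h2⟩)
        · exact ⟨Or.inl rfl, hne.symm⟩
        · exact ⟨Or.inr h1, h2⟩
    rw [this] at hcl
    have haI' : a ∉ G.cl (I \ {a}) := hI a haI
    have := cl_exchange hcl haI'
    rw [Set.insert_diff_singleton, Set.insert_eq_of_mem haI] at this
    exact hp this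

end GeometryOn

namespace GeometryOn
variable {X X' : Type*} {G : GeometryOn X}

/-- Core rank lemma: an independent set inside the closure of a finite set `I`
has at most `I.ncard` elements. -/
lemma ncard_le_of_indep_subset_cl :
    ∀ n {I J : Set X}, I.Finite → J.Finite → G.Independent J → J ⊆ G.cl I →
      (I \ J).ncard = n → J.ncard ≤ I.ncard := by
  intro n
  induction n with
  | zero =>
    intro I J hIfin hJfin hJ hJcl hn
    have hIJ : I ⊆ J := by
      rw [Set.ncard_eq_zero (hIfin.diff (t := J))] at hn
      exact Set.diff_eq_empty.mp hn
    have hJI : J ⊆ I := by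
      intro a haJ
      by_contra haI
      have hsub : I ⊆ J \ {a} := fun t ht =>
        (Set.mem_diff t).mpr ⟨hIJ ht, fun h => haI (h ▸ ht)⟩
      exact hJ a haJ (cl_mono hsub (hJcl haJ))
    exact Set.ncard_le_ncard hJI hIfin
  | succ n ih =>
    intro I J hIfin hJfin hJ hJcl hn
    have hne : (I \ J).Nonempty := by
      rw [Set.nonempty_iff_ne_empty]
      intro h
      rw [h, Set.ncard_empty] at hn
      omega
    obtain ⟨b, hbI, hbJ⟩ := hne
    by_cases hcase : J ⊆ G.cl (I \ {b})
    · have h1 : ((I \ {b}) \ J).ncard = n := by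
        rw [Set.diff_diff_comm]
        rw [Set.ncard_diff_singleton_of_mem ((Set.mem_diff b).mpr ⟨hbI, hbJ⟩)] at *
        omega
      calc J.ncard ≤ (I \ {b}).ncard :=
            ih hIfin.diff hJfin hJ hcase h1
        _ ≤ I.ncard := Set.ncard_le_ncard Set.diff_subset hIfin
    · rw [Set.not_subset] at hcase
      obtain ⟨a, haJ, hacl⟩ := hcase
      have haI : a ∈ G.cl I := hJcl haJ
      have haI' : a ∈ G.cl (insert b (I \ {b})) := by
        rwa [Set.insert_diff_singleton, Set.insert_eq_of_mem hbI]
      have hb' : b ∈ G.cl (insert a (I \ {b})) := cl_exchange haI' hacl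
      set I' : Set X := insert a (I \ {b}) with hI'
      have haIb : a ∉ I \ {b} := fun h => hacl (subset_cl _ h)
      have haInotmem : a ∉ I := by
        intro h
        have : a ≠ b := fun hab => hbJ (hab ▸ haJ)
        exact haIb ((Set.mem_diff a).mpr ⟨h, this⟩)
      have hI'fin : I'.Finite := hIfin.diff.insert a
      have hclsub : G.cl I ⊆ G.cl I' := by
        apply cl_subset (cl_isSubspace _)
        intro t ht
        by_cases htb : t = b
        · exact htb ▸ hb'
        · exact subset_cl _ (Set.mem_insert_of_mem a ((Set.mem_diff t).mpr ⟨ht, htb⟩))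
      have hJcl' : J ⊆ G.cl I' := hJcl.trans hclsub
      have hmeas : (I' \ J).ncard = n := by
        have : I' \ J = (I \ {b}) \ J := by
          rw [hI', Set.insert_diff_of_mem _ haJ]
        rw [this, Set.diff_diff_comm,
          Set.ncard_diff_singleton_of_mem ((Set.mem_diff b).mpr ⟨hbI, hbJ⟩)]
        omega
      have := ih hI'fin hJfin hJ hJcl' hmeas
      have hI'card : I'.ncard = I.ncard := by
        rw [hI', Set.ncard_insert_of_notMem haIb hIfin.diff,
          Set.ncard_diff_singleton_of_mem hbI]
        have : 0 < I.ncard := (Set.ncard_pos hIfin).mpr ⟨b, hbI⟩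
        omega
      omega

lemma indep_finite_of_subset_cl {I J : Set X} (hIfin : I.Finite)
    (hJ : G.Independent J) (hJcl : J ⊆ G.cl I) : J.Finite ∧ J.ncard ≤ I.ncard := by
  have hfin : J.Finite := by
    by_contra hinf
    replace hinf : J.Infinite := hinf
    obtain ⟨t, htJ, htfin, htcard⟩ := hinf.exists_subset_ncard_eq (I.ncard + 1)
    have := ncard_le_of_indep_subset_cl (G := G) ((I \ t).ncard) hIfin htfin
      (hJ.mono htJ) (htJ.trans hJcl) rfl
    omega
  exact ⟨hfin, ncard_le_of_indep_subset_cl (G := G) _ hIfin hfin hJ hJcl rfl⟩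

/-- Existence of a maximum-cardinality finset satisfying a predicate, given a cardinality bound. -/
lemma exists_maxcard {α : Type*} (P : Finset α → Prop) {F₀ : Finset α} (hF₀ : P F₀)
    {N : ℕ} (hN : ∀ F, P F → F.card ≤ N) :
    ∃ F, P F ∧ ∀ F', P F' → F'.card ≤ F.card := by
  set s : Set ℕ := {k | ∃ F, P F ∧ F.card = k} with hs
  have hne : s.Nonempty := ⟨F₀.card, F₀, hF₀, rfl⟩
  have hbdd : BddAbove s := ⟨N, fun k ⟨F, hF, hk⟩ => hk ▸ hN F hF⟩
  obtain ⟨F, hF, hFcard⟩ := Nat.sSup_mem hne hbdd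
  exact ⟨F, hF, fun F' hF' => hFcard ▸ le_csSup hbdd ⟨F', hF', rfl⟩⟩

end GeometryOn

namespace GeometryOn
variable {X X' : Type*} {G : GeometryOn X} {G' : GeometryOn X'} {φ : X → X'}

lemma cl_image_subset (hφ : G.IsMorphism G' φ) (A : Set X) :
    G.cl A ⊆ φ ⁻¹' (G'.cl (φ '' A)) := by
  apply cl_subset (hφ _ (cl_isSubspace _))
  intro a ha
  exact subset_cl _ (Set.mem_image_of_mem φ ha)

/-- A section of `φ` maps independent sets to independent sets. -/
lemma section_indep (hφ : G.IsMorphism G' φ) {s : X' → X} (hs : ∀ b, φ (s b) = b)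
    {A' : Set X'} (hA' : G'.Independent A') : G.Independent (s '' A') := by
  have hsinj : Function.Injective s := fun a b hab => by
    rw [← hs a, ← hs b, hab]
  intro a ha hacl
  obtain ⟨b, hbA', rfl⟩ := ha
  have himg : s '' A' \ {s b} = s '' (A' \ {b}) := by
    rw [← Set.image_singleton, ← Set.image_diff hsinj]
  rw [himg] at hacl
  have := cl_image_subset hφ (s '' (A' \ {b})) hacl
  rw [Set.image_image] at this
  simp only [hs] at this
  rw [Set.image_id'] at this
  have h2 : φ (s b) ∈ G'.cl (A' \ {b}) := this
  rw [hs b] at h2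
  exact hA' b hbA' h2

end GeometryOn

namespace GeometryOn
open Cardinal in
lemma mk_le_of_indep_of_basis {X : Type*} {G : GeometryOn X} {I B : Set X}
    (hI : G.Independent I) (hB : G.IsBasisOf B Set.univ) : #I ≤ #B := by
  obtain ⟨-, hBindep, hBcl⟩ := hB
  have hIcl : I ⊆ G.cl B := by rw [hBcl]; exact Set.subset_univ I
  by_cases hBfin : B.Finite
  · obtain ⟨hIfin, hcard⟩ := indep_finite_of_subset_cl hBfin hI hIcl
    haveI := hIfin.fintype
    haveI := hBfin.fintype
    rw [Cardinal.mk_fintype, Cardinal.mk_fintype]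
    have e1 : Fintype.card I = I.ncard := by
      rw [Set.ncard_eq_toFinset_card', Set.toFinset_card]
    have e2 : Fintype.card B = B.ncard := by
      rw [Set.ncard_eq_toFinset_card', Set.toFinset_card]
    rw [e1, e2]
    exact_mod_cast hcard
  · -- B infinite
    classical
    have hBinf : B.Infinite := hBfin
    haveI : Infinite ↥B := hBinf.to_subtype
    -- choose for each i ∈ I a finite subset of B whose closure contains i
    have hchoice : ∀ i : ↥I, ∃ F : Finset X, ↑F ⊆ B ∧ (i : X) ∈ G.cl ↑F := by
      intro i
      exact G.finitary B i (hIcl i.2)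
    choose f hfB hfcl using hchoice
    set f' : ↥I → {F : Finset X // ↑F ⊆ B} := fun i => ⟨f i, hfB i⟩ with hf'
    -- each fiber of f' is finite
    have hfiber : ∀ F : {F : Finset X // ↑F ⊆ B}, Finite {i : ↥I // f' i = F} := by
      intro F
      have hsub : Subtype.val '' {i : ↥I | f' i = F} ⊆ G.cl ↑(F : Finset X) := by
        rintro x ⟨i, hi, rfl⟩
        have : f i = (F : Finset X) := congrArg Subtype.val hi
        rw [← this]
        exact hfcl i
      have hindep : G.Independent (Subtype.val '' {i : ↥I | f' i = F}) :=
        hI.mono (by rintro x ⟨i, _, rfl⟩; exact i.2)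
      have hfin := (indep_finite_of_subset_cl (F : Finset X).finite_toSet hindep hsub).1
      have : Set.Finite {i : ↥I | f' i = F} :=
        Set.Finite.of_finite_image hfin (Subtype.val_injective.injOn)
      exact this.to_subtype
    have h1 : #I = Cardinal.sum (fun F : {F : Finset X // ↑F ⊆ B} => #{i : ↥I // f' i = F}) := by
      rw [← Cardinal.mk_sigma]
      exact (Cardinal.mk_congr (Equiv.sigmaFiberEquiv f')).symm
    have h2 : #I ≤ #{F : Finset X // ↑F ⊆ B} * ℵ₀ := by
      rw [h1, ← Cardinal.sum_const']
      apply Cardinal.sum_le_sum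
      intro F
      haveI := hfiber F
      exact (Cardinal.lt_aleph0_of_finite _).le
    have h3 : #{F : Finset X // ↑F ⊆ B} ≤ #(Finset ↥B) := by
      apply Cardinal.mk_le_of_injective (f := fun (F : {F : Finset X // ↑F ⊆ B}) => (F : Finset X).subtype (· ∈ B))
      intro F₁ F₂ hF
      simp only at hF
      apply Subtype.ext
      rw [← Finset.subtype_map_of_mem (fun x hx => F₁.2 hx),
        ← Finset.subtype_map_of_mem (fun x hx => F₂.2 hx), hF]
    rw [Cardinal.mk_finset_of_infinite] at h3
    have h4 : #I ≤ #B * ℵ₀ := h2.trans (by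
      exact mul_le_mul_left h3 ℵ₀)
    rwa [Cardinal.mul_aleph0_eq (Cardinal.infinite_iff.mp this)] at h4

end GeometryOn

namespace GeometryOn
variable {X X' : Type*} {G : GeometryOn X} {G' : GeometryOn X'} {φ : X → X'}

lemma part1 (hφ : G.IsMorphism G' φ) (hsurj : Function.Surjective φ)
    {B : Set X} {B' : Set X'} (hB : G.IsBasisOf B Set.univ) (hB' : G'.IsBasisOf B' Set.univ) :
    Nonempty (B' ↪ B) := by
  set s : X' → X := Function.surjInv hsurj with hsdef
  have hs : ∀ b, φ (s b) = b := Function.surjInv_eq hsurj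
  have hsinj : Function.Injective s := fun a b hab => by rw [← hs a, ← hs b, hab]
  have hIindep : G.Independent (s '' B') := section_indep hφ hs hB'.2.1
  obtain ⟨e2⟩ := Cardinal.le_def _ _ |>.mp (mk_le_of_indep_of_basis hIindep hB)
  refine ⟨Function.Embedding.trans ⟨fun b => ⟨s b, Set.mem_image_of_mem s b.2⟩, ?_⟩ e2⟩
  intro a b hab
  exact Subtype.ext (hsinj (congrArg Subtype.val hab))

end GeometryOn

namespace GeometryOn
variable {X X' : Type*} {G : GeometryOn X} {G' : GeometryOn X'} {φ : X → X'}

lemma indep_empty (G : GeometryOn X) : G.Independent (∅ : Set X) := fun a ha => absurd ha (Set.notMem_empty a)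

lemma finset_indep_card_le {Bb F : Finset X} (hBb : G.IsBasisOf ↑Bb Set.univ)
    (hF : G.Independent ↑F) : F.card ≤ Bb.card := by
  have h := ncard_le_of_indep_subset_cl (G := G) _ Bb.finite_toSet F.finite_toSet hF
    (by rw [hBb.2.2]; exact Set.subset_univ _) rfl
  rwa [Set.ncard_coe_finset, Set.ncard_coe_finset] at h

/-- Any independent finset extends to a spanning independent finset. -/
lemma exists_spanning_indep_ext (G : GeometryOn X) {Bb : Finset X}
    (hBb : G.IsBasisOf ↑Bb Set.univ) {I₀ : Finset X} (hI₀ : G.Independent ↑I₀) :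
    ∃ M : Finset X, I₀ ⊆ M ∧ G.Independent ↑M ∧ G.cl ↑M = Set.univ ∧ Bb.card ≤ M.card := by
  classical
  obtain ⟨M, ⟨hI₀M, hMindep⟩, hMmax⟩ := exists_maxcard
    (fun F : Finset X => I₀ ⊆ F ∧ G.Independent ↑F) (F₀ := I₀) ⟨le_rfl, hI₀⟩
    (N := Bb.card) (fun F hF => finset_indep_card_le hBb hF.2)
  have hMcl : G.cl ↑M = Set.univ := by
    by_contra hne
    obtain ⟨w, -, hw⟩ := Set.exists_of_ssubset ⟨Set.subset_univ _, fun h => hne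
      ((Set.subset_univ _).antisymm h |>.symm ▸ rfl)⟩
    have hwM : w ∉ M := fun h => hw (subset_cl _ (by exact_mod_cast h))
    have hins : G.Independent ↑(insert w M) := by
      rw [Finset.coe_insert]
      exact indep_insert hMindep hw
    have := hMmax (insert w M) ⟨hI₀M.trans (Finset.subset_insert w M), hins⟩
    rw [Finset.card_insert_of_notMem hwM] at this
    omega
  refine ⟨M, hI₀M, hMindep, hMcl, ?_⟩
  have h := ncard_le_of_indep_subset_cl (G := G) _ M.finite_toSet Bb.finite_toSet hBb.2.1
    (by rw [hMcl]; exact Set.subset_univ _) rfl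
  rwa [Set.ncard_coe_finset, Set.ncard_coe_finset] at h

/-- Every subspace has a finite basis (given the geometry has a finite basis). -/
lemma exists_finset_basis_of_subspace (G : GeometryOn X) {Bb : Finset X}
    (hBb : G.IsBasisOf ↑Bb Set.univ) {S : Set X} (hS : G.IsSubspace S) :
    ∃ I : Finset X, ↑I ⊆ S ∧ G.Independent ↑I ∧ G.cl ↑I = S := by
  classical
  obtain ⟨I, ⟨hIS, hIindep⟩, hImax⟩ := exists_maxcard
    (fun F : Finset X => ↑F ⊆ S ∧ G.Independent ↑F) (F₀ := ∅)
    ⟨by simp, by rw [Finset.coe_empty]; exact G.indep_empty⟩ (N := Bb.card) (fun F hF => finset_indep_card_le hBb hF.2)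
  refine ⟨I, hIS, hIindep, ?_⟩
  apply le_antisymm (cl_subset hS hIS)
  intro w hwS
  by_contra hw
  have hwI : w ∉ I := fun h => hw (subset_cl _ (by exact_mod_cast h))
  have hins : G.Independent ↑(insert w I) := by
    rw [Finset.coe_insert]
    exact indep_insert hIindep hw
  have := hImax (insert w I) ⟨by rw [Finset.coe_insert]; exact Set.insert_subset hwS hIS, hins⟩
  rw [Finset.card_insert_of_notMem hwI] at this
  omega

end GeometryOn

namespace GeometryOn
variable {X X' : Type*} {G : GeometryOn X} {G' : GeometryOn X'} {φ : X → X'}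

lemma main_count (hφ : G.IsMorphism G' φ) {s : X' → X} (hs : ∀ b, φ (s b) = b)
    {B : Finset X} {B' : Finset X'} (hB : G.IsBasisOf ↑B Set.univ)
    (hB' : G'.IsBasisOf ↑B' Set.univ) (hcard : B.card = B'.card)
    {K₀ : Set X} (hK₀fin : K₀.Finite) (hK₀ : G.Independent K₀)
    {I₀ M : Finset X'} (hI₀M : I₀ ⊆ M) (hM : G'.Independent ↑M)
    (hMcl : G'.cl ↑M = Set.univ) (himg : φ '' K₀ ⊆ G'.cl ↑I₀) :
    K₀.ncard ≤ I₀.card := by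
  classical
  have hsinj : Function.Injective s := fun a b hab => by rw [← hs a, ← hs b, hab]
  -- the incremental independence construction
  have key : ∀ E₀ : Finset X', E₀ ⊆ M \ I₀ → G.Independent (K₀ ∪ s '' ↑E₀) := by
    intro E₀
    induction E₀ using Finset.induction_on with
    | empty => intro _; simpa using hK₀
    | @insert a E₀ hnotmem ih =>
      intro hsub
      have haM : a ∈ M \ I₀ := hsub (Finset.mem_insert_self a E₀)
      have hE₀sub : E₀ ⊆ M \ I₀ := (Finset.subset_insert a E₀).trans hsub
      have hIndE₀ := ih hE₀sub
      have haI₀ : a ∉ I₀ := (Finset.mem_sdiff.mp haM).2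
      have haMm : a ∈ M := (Finset.mem_sdiff.mp haM).1
      have hanotcl : s a ∉ G.cl (K₀ ∪ s '' ↑E₀) := by
        intro hmem
        have h1 : φ (s a) ∈ G'.cl (φ '' (K₀ ∪ s '' ↑E₀)) := cl_image_subset hφ _ hmem
        rw [hs] at h1
        have himgeq : φ '' (K₀ ∪ s '' ↑E₀) = φ '' K₀ ∪ ↑E₀ := by
          rw [Set.image_union, Set.image_image]
          simp only [hs, Set.image_id']
        rw [himgeq] at h1
        have hsub2 : φ '' K₀ ∪ ↑E₀ ⊆ G'.cl (↑M \ {a}) := by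
          apply Set.union_subset
          · refine himg.trans (cl_mono ?_)
            intro t ht
            exact (Set.mem_diff t).mpr ⟨Finset.mem_coe.mpr (hI₀M ht), fun h => haI₀ (h ▸ ht)⟩
          · intro t ht
            apply subset_cl
            refine (Set.mem_diff t).mpr ⟨Finset.mem_coe.mpr ((Finset.mem_sdiff.mp (hE₀sub ht)).1),
              fun h => hnotmem (h ▸ ht)⟩
        have h2 : a ∈ G'.cl (↑M \ {a}) :=
          cl_subset (cl_isSubspace _) hsub2 h1
        exact hM a (Finset.mem_coe.mpr haMm) h2
      have hres := indep_insert hIndE₀ hanotcl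
      rw [Finset.coe_insert, Set.image_insert_eq, Set.union_insert]
      exact hres
  have hKind := key (M \ I₀) le_rfl
  set K : Set X := K₀ ∪ s '' ↑(M \ I₀) with hK
  have hEfin : (s '' ↑(M \ I₀) : Set X).Finite := ((M \ I₀).finite_toSet).image s
  have hKfin : K.Finite := hK₀fin.union hEfin
  -- disjointness
  have hdisj : Disjoint K₀ (s '' ↑(M \ I₀)) := by
    rw [Set.disjoint_left]
    rintro x hx1 ⟨e, heE, rfl⟩
    have heM : e ∈ M := (Finset.mem_sdiff.mp (Finset.mem_coe.mp heE)).1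
    have heI₀ : e ∉ I₀ := (Finset.mem_sdiff.mp (Finset.mem_coe.mp heE)).2
    have h1 : e ∈ G'.cl ↑I₀ := himg ⟨s e, hx1, hs e⟩
    have h2 : e ∈ G'.cl (↑M \ {e}) := by
      refine cl_mono ?_ h1
      intro t ht
      exact (Set.mem_diff t).mpr ⟨Finset.mem_coe.mpr (hI₀M ht), fun h => heI₀ (h ▸ ht)⟩
    exact hM e (Finset.mem_coe.mpr heM) h2
  have hKcard : K.ncard = K₀.ncard + (M \ I₀).card := by
    rw [hK, Set.ncard_union_eq hdisj hK₀fin hEfin,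
      Set.ncard_image_of_injective _ hsinj, Set.ncard_coe_finset]
  have hbound : K.ncard ≤ B.card := by
    have h := ncard_le_of_indep_subset_cl (G := G) _ B.finite_toSet hKfin hKind
      (by rw [hB.2.2]; exact Set.subset_univ _) rfl
    rwa [Set.ncard_coe_finset] at h
  have hB'M : B'.card ≤ M.card := by
    have h := ncard_le_of_indep_subset_cl (G := G') _ M.finite_toSet B'.finite_toSet hB'.2.1
      (by rw [hMcl]; exact Set.subset_univ _) rfl
    rwa [Set.ncard_coe_finset, Set.ncard_coe_finset] at h
  have hsd : (M \ I₀).card = M.card - I₀.card := Finset.card_sdiff_of_subset hI₀M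
  have hle : I₀.card ≤ M.card := Finset.card_le_card hI₀M
  omega

end GeometryOn

namespace GeometryOn
variable {X X' : Type*} {G : GeometryOn X} {G' : GeometryOn X'} {φ : X → X'}

lemma injective_of_dim_eq (hφ : G.IsMorphism G' φ) (hsurj : Function.Surjective φ)
    {B : Finset X} {B' : Finset X'} (hB : G.IsBasisOf ↑B Set.univ)
    (hB' : G'.IsBasisOf ↑B' Set.univ) (hcard : B.card = B'.card) :
    Function.Injective φ := by
  classical
  intro x y hxy
  by_contra hne
  set s : X' → X := Function.surjInv hsurj with hsdef
  have hs : ∀ b, φ (s b) = b := Function.surjInv_eq hsurj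
  set z : X' := φ x with hz
  have hzsing : G'.Independent ↑({z} : Finset X') := by
    rw [Finset.coe_singleton]
    intro a ha hcl
    rw [Set.mem_singleton_iff] at ha
    subst ha
    rw [Set.diff_self, cl_empty] at hcl
    exact hcl
  obtain ⟨M, hzM, hMindep, hMcl, hB'M⟩ := exists_spanning_indep_ext G' hB' hzsing
  have hpair : G.Independent ({x, y} : Set X) := by
    intro a ha hcl
    rcases Set.mem_insert_iff.mp ha with rfl | ha'
    · rw [Set.pair_diff_left hne, cl_singleton] at hcl
      exact hne (Set.mem_singleton_iff.mp hcl)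
    · rw [Set.mem_singleton_iff] at ha'
      subst ha'
      rw [Set.pair_diff_right hne, cl_singleton] at hcl
      exact hne (Set.mem_singleton_iff.mp hcl).symm
  have himg : φ '' ({x, y} : Set X) ⊆ G'.cl ↑({z} : Finset X') := by
    rw [Set.image_pair, ← hxy, ← hz, Set.pair_eq_singleton, Finset.coe_singleton]
    exact subset_cl _
  have hcount := main_count hφ hs hB hB' hcard (Set.toFinite _) hpair
    (Finset.singleton_subset_iff.mpr (hzM (Finset.mem_singleton_self z)))
    hMindep hMcl himg
  rw [Set.ncard_pair hne, Finset.card_singleton] at hcount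
  omega

lemma image_subspace_of_dim_eq (hφ : G.IsMorphism G' φ) (hsurj : Function.Surjective φ)
    {B : Finset X} {B' : Finset X'} (hB : G.IsBasisOf ↑B Set.univ)
    (hB' : G'.IsBasisOf ↑B' Set.univ) (hcard : B.card = B'.card)
    {S : Set X} (hS : G.IsSubspace S) : G'.IsSubspace (φ '' S) := by
  classical
  set s : X' → X := Function.surjInv hsurj with hsdef
  have hs : ∀ b, φ (s b) = b := Function.surjInv_eq hsurj
  obtain ⟨I, hIS, hIindep, hIcl⟩ := exists_finset_basis_of_subspace G hB hS
  suffices hsuff : φ '' S = G'.cl (φ '' ↑I) by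
    rw [hsuff]; exact cl_isSubspace _
  apply le_antisymm
  · rintro _ ⟨w, hwS, rfl⟩
    have : w ∈ G.cl ↑I := hIcl.symm ▸ hwS
    exact cl_image_subset hφ ↑I this
  · intro zz hzz
    obtain ⟨w, rfl⟩ := hsurj zz
    refine ⟨w, ?_, rfl⟩
    by_contra hw
    have hwcl : w ∉ G.cl ↑I := fun h => hw (hIcl ▸ h)
    have hK₀ : G.Independent (insert w ↑I) := indep_insert hIindep hwcl
    obtain ⟨I'₀, hI'₀sub, hI'₀indep, hI'₀cl⟩ :=
      exists_finset_basis_of_subspace G' hB' (cl_isSubspace (φ '' ↑I))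
    have hI'₀card : I'₀.card ≤ I.card := by
      have h := ncard_le_of_indep_subset_cl (G := G') _ ((I.finite_toSet).image φ)
        I'₀.finite_toSet hI'₀indep hI'₀sub rfl
      rw [Set.ncard_coe_finset] at h
      calc I'₀.card ≤ (φ '' ↑I).ncard := h
        _ ≤ (↑I : Set X).ncard := Set.ncard_image_le I.finite_toSet
        _ = I.card := Set.ncard_coe_finset I
    obtain ⟨M, hI'₀M, hMindep, hMcl, hB'M⟩ := exists_spanning_indep_ext G' hB' hI'₀indep
    have himg : φ '' (insert w ↑I) ⊆ G'.cl ↑I'₀ := by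
      rw [Set.image_insert_eq, hI'₀cl]
      exact Set.insert_subset hzz (subset_cl _)
    have hcount := main_count hφ hs hB hB' hcard ((I.finite_toSet).insert w) hK₀
      hI'₀M hMindep hMcl himg
    have hwI : w ∉ (↑I : Set X) := fun h => hwcl (subset_cl _ h)
    rw [Set.ncard_insert_of_notMem hwI I.finite_toSet, Set.ncard_coe_finset] at hcount
    omega

end GeometryOn


open GeometryOn in
/-- a surjective morphism of geometries satisfies `dim X ≥ dim X'`
(any basis of `X'` embeds into any basis of `X`, i.e. has cardinality at most that of
a basis of `X`); and if `dim X = dim X' < ∞` then `φ` is an isomorphism. -/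
theorem surjective_morphism_dim {X X' : Type*} (G : GeometryOn X) (G' : GeometryOn X')
    (φ : X → X') (hφ : G.IsMorphism G' φ) (hsurj : Function.Surjective φ) :
    (∀ B : Set X, ∀ B' : Set X', G.IsBasisOf B Set.univ → G'.IsBasisOf B' Set.univ →
      Nonempty (B' ↪ B)) ∧
    (∀ (B : Finset X) (B' : Finset X'),
      G.IsBasisOf ↑B Set.univ → G'.IsBasisOf ↑B' Set.univ → B.card = B'.card →
      Function.Bijective φ ∧ ∀ S : Set X, G.IsSubspace S → G'.IsSubspace (φ '' S)) := by
  constructor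
  · intro B B' hB hB'
    exact GeometryOn.part1 hφ hsurj hB hB'
  · intro B B' hB hB' hcard
    exact ⟨⟨GeometryOn.injective_of_dim_eq hφ hsurj hB hB' hcard, hsurj⟩,
      fun S hS => GeometryOn.image_subspace_of_dim_eq hφ hsurj hB hB' hcard hS⟩
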